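/- Let n, k, i be natural numbers with 1 ≤ i ≤ k and n ≥ 2k + 1, let K denote the subtype {S : Finset (Fin n) // S.card = k}, and let M : Matrix K K ℝ be the disjointness matrix, viewed as an ℝ-linear endomorphism of K → ℝ. Then the eigenspace of this endomorphism for the eigenvalue (−1)^i · C(n−k−i, k−i) has dimension (finrank over ℝ) exactly C(n, i) − C(n, i−1). -/

import Mathlib

/-- The disjointness (Kneser) matrix on `k`-element subsets of `Fin n`. -/
def disjMatrix (n k : ℕ) :
    Matrix {S : Finset (Fin n) // S.card = k} {S : Finset (Fin n) // S.card = k} ℝ :=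
  Matrix.of fun S T => if Disjoint S.1 T.1 then 1 else 0

open Finset

namespace KneserAux

abbrev KK (n m : ℕ) := {S : Finset (Fin n) // S.card = m}

variable {n : ℕ}
lemma count_master (m : ℕ) (A B : Finset (Fin n)) (hd : Disjoint A B) (hm : A.card ≤ m) :
    (Finset.univ.filter fun T : Finset (Fin n) => T.card = m ∧ A ⊆ T ∧ Disjoint B T).card
      = (n - A.card - B.card).choose (m - A.card) := by
  have hbij : (Finset.univ.filter fun T : Finset (Fin n) => T.card = m ∧ A ⊆ T ∧ Disjoint B T).card
      = ((A ∪ B)ᶜ.powersetCard (m - A.card)).card := by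
    apply Finset.card_bij' (fun T _ => T \ A) (fun C _ => C ∪ A)
    · intro T hT
      simp only [Finset.mem_filter, Finset.mem_univ, true_and] at hT
      obtain ⟨hc, hsub, hdisj⟩ := hT
      rw [Finset.mem_powersetCard]
      constructor
      · intro x hx
        simp only [Finset.mem_sdiff] at hx
        simp only [Finset.mem_compl, Finset.mem_union]
        push_neg
        exact ⟨hx.2, fun hb => (Finset.disjoint_right.1 hdisj) hx.1 hb⟩
      · rw [Finset.card_sdiff_of_subset hsub, hc]
    · intro C hC
      rw [Finset.mem_powersetCard] at hC
      obtain ⟨hsub, hc⟩ := hC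
      have hCA : Disjoint C A := by
        refine Finset.disjoint_left.2 fun x hx hxa => ?_
        have := hsub hx
        simp only [Finset.mem_compl, Finset.mem_union] at this
        exact this (Or.inl hxa)
      simp only [Finset.mem_filter, Finset.mem_univ, true_and]
      refine ⟨?_, Finset.subset_union_right, ?_⟩
      · rw [Finset.card_union_of_disjoint hCA, hc]
        omega
      · refine Finset.disjoint_right.2 fun x hx hxb => ?_
        rcases Finset.mem_union.1 hx with h | h
        · have := hsub h
          simp only [Finset.mem_compl, Finset.mem_union] at this
          exact this (Or.inr hxb)
        · exact (Finset.disjoint_left.1 hd) h hxb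
    · intro T hT
      simp only [Finset.mem_filter, Finset.mem_univ, true_and] at hT
      exact Finset.sdiff_union_of_subset hT.2.1
    · intro C hC
      rw [Finset.mem_powersetCard] at hC
      have hCA : Disjoint C A := by
        refine Finset.disjoint_left.2 fun x hx hxa => ?_
        have := hC.1 hx
        simp only [Finset.mem_compl, Finset.mem_union] at this
        exact this (Or.inl hxa)
      exact Finset.union_sdiff_cancel_right hCA
  rw [hbij, Finset.card_powersetCard, Finset.card_compl,
    Finset.card_union_of_disjoint hd, Fintype.card_fin, Nat.sub_sub]


lemma sum_subtype_eq (m : ℕ) (f : Finset (Fin n) → ℝ) :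
    ∑ T : KK n m, f T.1 = ∑ T ∈ Finset.univ.filter (fun T : Finset (Fin n) => T.card = m), f T :=
  (Finset.sum_subtype _ (fun x => by simp) f).symm

lemma count_inner (m : ℕ) (p : Finset (Fin n) → Prop) [DecidablePred p] :
    ∑ T : KK n m, (if p T.1 then (1:ℝ) else 0)
      = ((Finset.univ.filter fun T : Finset (Fin n) => T.card = m ∧ p T).card : ℝ) := by
  rw [sum_subtype_eq m (fun T => if p T then (1:ℝ) else 0), Finset.sum_boole, Finset.filter_filter]

/-- `N f A = ∑_{S ⊇ A} f S` over `i`-sets `S`. -/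
def Nfun (i : ℕ) (f : KK n i → ℝ) (A : Finset (Fin n)) : ℝ :=
  ∑ S : KK n i, if A ⊆ S.1 then f S else 0

lemma Nfun_card_gt (i : ℕ) (f : KK n i → ℝ) (A : Finset (Fin n)) (hA : i < A.card) :
    Nfun i f A = 0 := by
  refine Finset.sum_eq_zero fun S _ => ?_
  rw [if_neg]
  intro hsub
  have := Finset.card_le_card hsub
  rw [S.2] at this
  omega

lemma subset_iff_disjoint_compl (T S : Finset (Fin n)) : T ⊆ S ↔ Disjoint Sᶜ T := by
  constructor
  · intro h
    refine Finset.disjoint_left.2 fun x hx hxt => ?_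
    exact (Finset.mem_compl.1 hx) (h hxt)
  · intro h x hx
    by_contra hc
    exact Finset.disjoint_left.1 h (Finset.mem_compl.2 hc) hx

lemma harm_extend (i : ℕ) (hi : 1 ≤ i) (hin : i ≤ n) (f : KK n i → ℝ)
    (hf : ∀ T : KK n (i-1), Nfun i f T.1 = 0) :
    ∀ A : Finset (Fin n), A.card < i → Nfun i f A = 0 := by
  intro A hA
  have hkey : ∑ T : KK n (i-1), (if A ⊆ T.1 then Nfun i f T.1 else 0) = 0 := by
    refine Finset.sum_eq_zero fun T _ => ?_
    rw [hf T]
    simp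
  have hexp : ∑ T : KK n (i-1), (if A ⊆ T.1 then Nfun i f T.1 else 0)
      = ∑ S : KK n i, (∑ T : KK n (i-1), if A ⊆ T.1 ∧ T.1 ⊆ S.1 then (1:ℝ) else 0) * f S := by
    have step1 : ∀ T : KK n (i-1), (if A ⊆ T.1 then Nfun i f T.1 else 0)
        = ∑ S : KK n i, if A ⊆ T.1 ∧ T.1 ⊆ S.1 then f S else 0 := by
      intro T
      unfold Nfun
      by_cases h : A ⊆ T.1 <;> simp [h]
    rw [Finset.sum_congr rfl fun T _ => step1 T, Finset.sum_comm]
    refine Finset.sum_congr rfl fun S _ => ?_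
    rw [Finset.sum_mul]
    refine Finset.sum_congr rfl fun T _ => ?_
    by_cases h1 : A ⊆ T.1 ∧ T.1 ⊆ S.1 <;> simp [h1]
  have hcnt : ∀ S : KK n i,
      (∑ T : KK n (i-1), if A ⊆ T.1 ∧ T.1 ⊆ S.1 then (1:ℝ) else 0)
        = ((i - A.card : ℕ) : ℝ) * (if A ⊆ S.1 then 1 else 0) := by
    intro S
    by_cases hAS : A ⊆ S.1
    · rw [count_inner (i-1) (fun T => A ⊆ T ∧ T ⊆ S.1)]
      have heq : (Finset.univ.filter fun T : Finset (Fin n) => T.card = i - 1 ∧ A ⊆ T ∧ T ⊆ S.1)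
          = (Finset.univ.filter fun T : Finset (Fin n) => T.card = i - 1 ∧ A ⊆ T ∧ Disjoint S.1ᶜ T) := by
        refine Finset.filter_congr fun T _ => ?_
        rw [subset_iff_disjoint_compl T S.1]
      have hdAB : Disjoint A S.1ᶜ := by
        refine Finset.disjoint_left.2 fun x hxA hxC => ?_
        exact (Finset.mem_compl.1 hxC) (hAS hxA)
      rw [heq, count_master (i-1) A S.1ᶜ hdAB (by omega)]
      · have h1 : S.1ᶜ.card = n - i := by rw [Finset.card_compl, S.2, Fintype.card_fin]
        have h2 : A.card ≤ i := le_of_lt hA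
        have hAn : A.card ≤ n := by
          have := Finset.card_le_univ A
          simpa [Finset.card_univ] using this
        have h3 : n - A.card - S.1ᶜ.card = i - A.card := by omega
        rw [h3]
        have h4 : i - 1 - A.card = (i - A.card) - 1 := by omega
        have h6 : (i - A.card).choose (i - A.card - 1) = i - A.card := by
          rw [Nat.choose_symm (by omega : 1 ≤ i - A.card), Nat.choose_one_right]
        rw [h4, h6]
        simp [hAS]
    · rw [if_neg hAS, mul_zero]
      refine Finset.sum_eq_zero fun T _ => ?_
      rw [if_neg]
      rintro ⟨h1, h2⟩
      exact hAS (h1.trans h2)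
  have : (0:ℝ) = ((i - A.card : ℕ) : ℝ) * Nfun i f A := by
    rw [← hkey, hexp]
    unfold Nfun
    rw [Finset.mul_sum]
    refine Finset.sum_congr rfl fun S _ => ?_
    rw [hcnt S]
    by_cases h : A ⊆ S.1 <;> simp [h]
  have hpos : ((i - A.card : ℕ) : ℝ) ≠ 0 := by
    have h0 : 0 < i - A.card := by omega
    have : (0:ℝ) < ((i - A.card : ℕ) : ℝ) := by exact_mod_cast h0
    exact this.ne'
  exact (mul_eq_zero.mp this.symm).resolve_left hpos


lemma star (i : ℕ) (f : KK n i → ℝ)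
    (hf : ∀ A : Finset (Fin n), A.card < i → Nfun i f A = 0) (F : Finset (Fin n)) :
    ∑ S : KK n i, (if Disjoint S.1 F then f S else 0)
      = (-1:ℝ)^i * ∑ S : KK n i, (if S.1 ⊆ F then f S else 0) := by
  have ind : ∀ S : KK n i, (if Disjoint S.1 F then f S else 0)
      = ∑ A ∈ F.powerset, (if A ⊆ S.1 then ((-1:ℝ)^A.card) * f S else 0) := by
    intro S
    have h2 : F.powerset.filter (fun A => A ⊆ S.1) = (F ∩ S.1).powerset := by
      ext A
      simp only [Finset.mem_filter, Finset.mem_powerset, Finset.subset_inter_iff]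
    have h1 : ∑ A ∈ F.powerset, (if A ⊆ S.1 then ((-1:ℝ)^A.card) else 0)
        = if Disjoint S.1 F then 1 else 0 := by
      rw [← Finset.sum_filter, h2]
      have hz := @Finset.sum_powerset_neg_one_pow_card (Fin n) _ (F ∩ S.1)
      have hcast : ∑ A ∈ (F ∩ S.1).powerset, ((-1:ℝ)^A.card)
          = ((∑ A ∈ (F ∩ S.1).powerset, (-1:ℤ)^A.card : ℤ) : ℝ) := by
        push_cast
        rfl
      rw [hcast, hz]
      by_cases hd : Disjoint S.1 F
      · rw [if_pos ?_, if_pos hd]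
        · norm_num
        · rw [← Finset.disjoint_iff_inter_eq_empty]
          exact hd.symm
      · rw [if_neg ?_, if_neg hd]
        · norm_num
        · rw [← Finset.disjoint_iff_inter_eq_empty]
          exact fun h => hd h.symm
    calc (if Disjoint S.1 F then f S else 0)
        = (if Disjoint S.1 F then (1:ℝ) else 0) * f S := by
          by_cases h : Disjoint S.1 F <;> simp [h]
      _ = (∑ A ∈ F.powerset, (if A ⊆ S.1 then ((-1:ℝ)^A.card) else 0)) * f S := by rw [h1]
      _ = ∑ A ∈ F.powerset, (if A ⊆ S.1 then ((-1:ℝ)^A.card) * f S else 0) := by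
          rw [Finset.sum_mul]
          refine Finset.sum_congr rfl fun A _ => ?_
          by_cases h : A ⊆ S.1 <;> simp [h]
  rw [Finset.sum_congr rfl fun S _ => ind S, Finset.sum_comm]
  have hNf : ∀ A : Finset (Fin n),
      (∑ S : KK n i, if A ⊆ S.1 then ((-1:ℝ)^A.card) * f S else 0)
        = ((-1:ℝ)^A.card) * Nfun i f A := by
    intro A
    unfold Nfun
    rw [Finset.mul_sum]
    refine Finset.sum_congr rfl fun S _ => ?_
    by_cases h : A ⊆ S.1 <;> simp [h]
  rw [Finset.sum_congr rfl fun A _ => hNf A]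
  rw [← Finset.sum_filter_of_ne (p := fun A => A.card = i)
    (fun A _ hne => by
      by_contra hc
      rcases Nat.lt_or_ge A.card i with h | h
      · exact hne (by rw [hf A h, mul_zero])
      · have : i < A.card := lt_of_le_of_ne h (Ne.symm hc)
        exact hne (by rw [Nfun_card_gt i f A this, mul_zero]))]
  have hNA : ∀ A ∈ F.powerset.filter (fun A => A.card = i),
      ((-1:ℝ)^A.card) * Nfun i f A = ∑ S : KK n i, (if S.1 = A then ((-1:ℝ)^i) * f S else 0) := by
    intro A hA
    simp only [Finset.mem_filter, Finset.mem_powerset] at hA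
    unfold Nfun
    rw [Finset.mul_sum, hA.2]
    refine Finset.sum_congr rfl fun S _ => ?_
    have hiff : A ⊆ S.1 ↔ S.1 = A := by
      constructor
      · intro h
        exact (Finset.eq_of_subset_of_card_le h (by rw [S.2, hA.2])).symm
      · intro h
        rw [h]
    by_cases h : A ⊆ S.1
    · rw [if_pos h, if_pos (hiff.1 h)]
    · rw [if_neg h, if_neg (fun he => h (hiff.2 he)), mul_zero]
  rw [Finset.sum_congr rfl hNA, Finset.sum_comm]
  rw [Finset.mul_sum]
  refine Finset.sum_congr rfl fun S _ => ?_
  rw [Finset.sum_ite_eq (F.powerset.filter (fun A => A.card = i)) S.1 (fun _ => ((-1:ℝ)^i) * f S)]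
  have : S.1 ∈ F.powerset.filter (fun A => A.card = i) ↔ S.1 ⊆ F := by
    simp [Finset.mem_filter, Finset.mem_powerset, S.2]
  by_cases h : S.1 ⊆ F
  · rw [if_pos (this.2 h), if_pos h]
  · rw [if_neg (fun hm => h (this.1 hm)), if_neg h, mul_zero]


lemma key (i k : ℕ) (hik : i ≤ k) (f : KK n i → ℝ)
    (hf : ∀ A : Finset (Fin n), A.card < i → Nfun i f A = 0)
    (F : Finset (Fin n)) :
    ∑ G : KK n k, (if Disjoint F G.1 then (∑ S : KK n i, if S.1 ⊆ G.1 then f S else 0) else 0)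
      = ((n - i - F.card).choose (k - i) : ℝ)
        * ((-1:ℝ)^i * ∑ S : KK n i, (if S.1 ⊆ F then f S else 0)) := by
  have step1 : ∀ G : KK n k,
      (if Disjoint F G.1 then (∑ S : KK n i, if S.1 ⊆ G.1 then f S else 0) else 0)
        = ∑ S : KK n i, (if S.1 ⊆ G.1 ∧ Disjoint F G.1 then f S else 0) := by
    intro G
    by_cases h : Disjoint F G.1 <;> simp [h]
  rw [Finset.sum_congr rfl fun G _ => step1 G, Finset.sum_comm]
  have step2 : ∀ S : KK n i,
      (∑ G : KK n k, if S.1 ⊆ G.1 ∧ Disjoint F G.1 then f S else 0)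
        = ((n - i - F.card).choose (k - i) : ℝ) * (if Disjoint S.1 F then f S else 0) := by
    intro S
    by_cases hd : Disjoint S.1 F
    · have hsum : (∑ G : KK n k, if S.1 ⊆ G.1 ∧ Disjoint F G.1 then f S else 0)
          = (∑ G : KK n k, if S.1 ⊆ G.1 ∧ Disjoint F G.1 then (1:ℝ) else 0) * f S := by
        rw [Finset.sum_mul]
        refine Finset.sum_congr rfl fun G _ => ?_
        by_cases h : S.1 ⊆ G.1 ∧ Disjoint F G.1 <;> simp [h]
      rw [hsum, count_inner k (fun G => S.1 ⊆ G ∧ Disjoint F G),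
        count_master k S.1 F (by exact hd) (by rw [S.2]; exact hik), S.2, if_pos hd]
    · rw [if_neg hd, mul_zero]
      refine Finset.sum_eq_zero fun G _ => ?_
      rw [if_neg]
      rintro ⟨h1, h2⟩
      exact hd (Finset.disjoint_left.2 fun x hxS hxF => Finset.disjoint_left.1 h2 hxF (h1 hxS))
  rw [Finset.sum_congr rfl fun S _ => step2 S, ← Finset.mul_sum, star i f hf F]


def upMat (n k i : ℕ) : Matrix (KK n k) (KK n i) ℝ :=
  Matrix.of fun G S => if S.1 ⊆ G.1 then 1 else 0

lemma upMat_mulVec (k i : ℕ) (f : KK n i → ℝ) (G : KK n k) :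
    (upMat n k i).mulVec f G = ∑ S : KK n i, if S.1 ⊆ G.1 then f S else 0 := by
  simp [upMat, Matrix.mulVec, dotProduct, boole_mul]

def downMat (n i : ℕ) : Matrix (KK n (i-1)) (KK n i) ℝ :=
  Matrix.of fun T S => if T.1 ⊆ S.1 then 1 else 0

lemma mem_ker_downMat (i : ℕ) (f : KK n i → ℝ) :
    f ∈ LinearMap.ker (Matrix.mulVecLin (downMat n i)) ↔ ∀ T : KK n (i-1), Nfun i f T.1 = 0 := by
  rw [LinearMap.mem_ker]
  constructor
  · intro h T
    have := congrFun h T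
    simpa [downMat, Matrix.mulVecLin_apply, Matrix.mulVec, dotProduct, boole_mul, Nfun] using this
  · intro h
    funext T
    simpa [downMat, Matrix.mulVecLin_apply, Matrix.mulVec, dotProduct, boole_mul, Nfun] using h T

lemma sum_subset_self (i : ℕ) (f : KK n i → ℝ) (S0 : KK n i) :
    ∑ S : KK n i, (if S.1 ⊆ S0.1 then f S else 0) = f S0 := by
  rw [Fintype.sum_eq_single S0 ?_]
  · simp
  · intro S hS
    rw [if_neg]
    intro hsub
    exact hS (Subtype.ext (Finset.eq_of_subset_of_card_le hsub (by rw [S.2, S0.2])))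

lemma up_injective (i k : ℕ) (hik : i ≤ k) (hkn : 2*k+1 ≤ n)
    (f : KK n i → ℝ) (hf : ∀ A : Finset (Fin n), A.card < i → Nfun i f A = 0)
    (h0 : (upMat n k i).mulVec f = 0) : f = 0 := by
  funext S0
  have hk := key i k hik f hf S0.1
  have hz : ∑ G : KK n k,
      (if Disjoint S0.1 G.1 then (∑ S : KK n i, if S.1 ⊆ G.1 then f S else 0) else 0) = 0 := by
    refine Finset.sum_eq_zero fun G _ => ?_
    have : ∑ S : KK n i, (if S.1 ⊆ G.1 then f S else 0) = 0 := by
      rw [← upMat_mulVec k i f G, h0]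
      rfl
    rw [this]
    simp
  rw [hz, sum_subset_self i f S0, S0.2] at hk
  have hC : (0:ℝ) < (((n - i - i).choose (k - i) : ℕ) : ℝ) := by
    have : k - i ≤ n - i - i := by omega
    exact_mod_cast Nat.choose_pos this
  have hpow : ((-1:ℝ)^i) ≠ 0 := by
    apply pow_ne_zero
    norm_num
  have := hk.symm
  rcases mul_eq_zero.mp this with h | h
  · exact absurd h hC.ne'
  · rcases mul_eq_zero.mp h with h' | h'
    · exact absurd h' hpow
    · simpa using h'


lemma up_mem_eigen (i k : ℕ) (hik : i ≤ k) (hkn : 2*k+1 ≤ n)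
    (f : KK n i → ℝ) (hf : ∀ A : Finset (Fin n), A.card < i → Nfun i f A = 0) :
    (disjMatrix n k).mulVec ((upMat n k i).mulVec f)
      = ((-1:ℝ)^i * ((n - k - i).choose (k - i) : ℝ)) • ((upMat n k i).mulVec f) := by
  funext F
  have hM : (disjMatrix n k).mulVec ((upMat n k i).mulVec f) F
      = ∑ G : KK n k, (if Disjoint F.1 G.1
          then (∑ S : KK n i, if S.1 ⊆ G.1 then f S else 0) else 0) := by
    simp only [disjMatrix, Matrix.mulVec, dotProduct, Matrix.of_apply, boole_mul]
    refine Finset.sum_congr rfl fun G _ => ?_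
    congr 1
    simp [upMat, boole_mul]
  rw [hM, key i k hik f hf F.1, Pi.smul_apply, upMat_mulVec, smul_eq_mul, F.2]
  have : n - i - k = n - k - i := by omega
  rw [this]
  ring

/-- the all-ones vector is an eigenvector for `i = 0`. -/
lemma ones_mem_eigen (k : ℕ) (hkn : 2*k+1 ≤ n) :
    (disjMatrix n k).mulVec (fun _ : KK n k => (1:ℝ))
      = (((n - k).choose k : ℕ) : ℝ) • (fun _ : KK n k => (1:ℝ)) := by
  funext F
  have hM : (disjMatrix n k).mulVec (fun _ : KK n k => (1:ℝ)) F
      = ∑ G : KK n k, (if Disjoint F.1 G.1 then (1:ℝ) else 0) := by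
    simp [disjMatrix, Matrix.mulVec, dotProduct, boole_mul]
  rw [hM, count_inner k (fun G => Disjoint F.1 G)]
  have heq : (Finset.univ.filter fun T : Finset (Fin n) => T.card = k ∧ Disjoint F.1 T)
      = (Finset.univ.filter fun T : Finset (Fin n) => T.card = k ∧ ∅ ⊆ T ∧ Disjoint F.1 T) := by
    refine Finset.filter_congr fun T _ => ?_
    simp
  rw [heq, count_master k ∅ F.1 (Finset.disjoint_empty_left _) (Nat.zero_le k)]
  simp only [Finset.card_empty, Nat.sub_zero, F.2, Pi.smul_apply, smul_eq_mul, mul_one]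


lemma tele (n k : ℕ) (h : 2*k+1 ≤ n) :
    ∑ j ∈ Finset.range (k+1), (if j = 0 then 1 else n.choose j - n.choose (j-1))
      = n.choose k := by
  induction k with
  | zero => simp
  | succ m ih =>
    rw [Finset.sum_range_succ, ih (by omega), if_neg (Nat.succ_ne_zero m)]
    have hmono : n.choose m ≤ n.choose (m+1) :=
      Nat.choose_le_succ_of_lt_half_left (by omega)
    simp only [Nat.add_sub_cancel]
    omega

lemma c_step (n k j : ℕ) (hj : j < k) (hn : 2*k+1 ≤ n) :
    (n - k - (j+1)).choose (k - (j+1)) < (n - k - j).choose (k - j) := by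
  obtain ⟨a, ha⟩ : ∃ a, n - k - (j+1) = a := ⟨_, rfl⟩
  obtain ⟨b, hb⟩ : ∃ b, k - (j+1) = b := ⟨_, rfl⟩
  have h1 : n - k - j = a + 1 := by omega
  have h2 : k - j = b + 1 := by omega
  rw [ha, hb, h1, h2, Nat.choose_succ_succ]
  have hpos : 0 < a.choose (b+1) := Nat.choose_pos (by omega)
  show a.choose b < a.choose b + a.choose (b+1)
  omega

lemma c_lt (n k : ℕ) (hn : 2*k+1 ≤ n) :
    ∀ j2, j2 ≤ k → ∀ j1, j1 < j2 →
      (n - k - j2).choose (k - j2) < (n - k - j1).choose (k - j1) := by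
  intro j2
  induction j2 with
  | zero => intro _ j1 h1; omega
  | succ m ih =>
    intro h2 j1 h1
    have hstep := c_step n k m (by omega) hn
    rcases Nat.lt_or_ge j1 m with h | h
    · exact hstep.trans (ih (by omega) j1 h)
    · have : j1 = m := by omega
      subst this
      exact hstep

lemma mu_inj (n k : ℕ) (hn : 2*k+1 ≤ n) :
    ∀ j1, j1 ≤ k → ∀ j2, j2 ≤ k →
      ((-1:ℝ)^j1 * (((n - k - j1).choose (k - j1) : ℕ) : ℝ))
        = ((-1:ℝ)^j2 * (((n - k - j2).choose (k - j2) : ℕ) : ℝ)) → j1 = j2 := by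
  intro j1 h1 j2 h2 heq
  by_contra hne
  have habs : ∀ j : ℕ, |(-1:ℝ)^j * (((n - k - j).choose (k - j) : ℕ) : ℝ)|
      = (((n - k - j).choose (k - j) : ℕ) : ℝ) := by
    intro j
    rw [abs_mul, abs_pow, abs_neg, abs_one, one_pow, one_mul,
      abs_of_nonneg (by positivity)]
  have h3 := congrArg abs heq
  rw [habs, habs] at h3
  have h4 : (n - k - j1).choose (k - j1) = (n - k - j2).choose (k - j2) := by
    exact_mod_cast h3
  rcases Nat.lt_or_ge j1 j2 with h | h
  · have := c_lt n k hn j2 h2 j1 h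
    omega
  · have hlt : j2 < j1 := by omega
    have := c_lt n k hn j1 h1 j2 hlt
    omega

lemma sum_finrank_le {V : Type*} [AddCommGroup V] [Module ℝ V] [FiniteDimensional ℝ V]
    {m : ℕ} (E : Fin m → Submodule ℝ V) (h : iSupIndep E) :
    ∑ j : Fin m, Module.finrank ℝ (E j) ≤ Module.finrank ℝ V := by
  have claim : ∀ s : Finset (Fin m), ∑ j ∈ s, Module.finrank ℝ (E j)
      = Module.finrank ℝ ((⨆ j ∈ s, E j : Submodule ℝ V)) := by
    intro s
    induction s using Finset.induction_on with
    | empty =>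
      have hbot : (⨆ j ∈ (∅ : Finset (Fin m)), E j) = ⊥ := by
        apply le_bot_iff.1
        exact iSup₂_le fun j hj => absurd hj (Finset.notMem_empty j)
      rw [hbot, finrank_bot]
      simp
    | @insert a s ha ih =>
      rw [Finset.sum_insert ha, ih, Finset.iSup_insert]
      have hdisj : Disjoint (E a) ((⨆ j ∈ s, E j : Submodule ℝ V)) := by
        refine (h a).mono_right ?_
        refine iSup₂_le fun j hj => ?_
        exact le_iSup₂ (f := fun (j : Fin m) (_ : j ≠ a) => E j) j (fun he => ha (he ▸ hj))
      have hkey := Submodule.finrank_sup_add_finrank_inf_eq (E a) (⨆ j ∈ s, E j)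
      rw [hdisj.eq_bot, finrank_bot] at hkey
      omega
  calc ∑ j : Fin m, Module.finrank ℝ (E j)
      = Module.finrank ℝ ((⨆ j ∈ Finset.univ, E j : Submodule ℝ V)) := claim Finset.univ
    _ ≤ Module.finrank ℝ V := Submodule.finrank_le _


end KneserAux

open KneserAux

theorem disjMatrix_eigenspace_finrank (n k i : ℕ)
    (hi : 1 ≤ i) (hik : i ≤ k) (hkn : 2 * k + 1 ≤ n) :
    Module.finrank ℝ
        (Module.End.eigenspace (Matrix.mulVecLin (disjMatrix n k))
          ((-1 : ℝ) ^ i * ((n - k - i).choose (k - i) : ℝ)))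
      = n.choose i - n.choose (i - 1) := by
  classical
  let μ : ℕ → ℝ := fun j => (-1:ℝ)^j * (((n - k - j).choose (k - j) : ℕ) : ℝ)
  let E : ℕ → Submodule ℝ (KK n k → ℝ) :=
    fun j => Module.End.eigenspace (Matrix.mulVecLin (disjMatrix n k)) (μ j)
  show Module.finrank ℝ (E i) = n.choose i - n.choose (i - 1)
  have hdim : ∀ m : ℕ, Module.finrank ℝ (KK n m → ℝ) = n.choose m := by
    intro m
    rw [Module.finrank_fintype_fun_eq_card]
    simp
  -- lower bound for 1 ≤ j ≤ k
  have low : ∀ j, 1 ≤ j → j ≤ k →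
      n.choose j - n.choose (j-1) ≤ Module.finrank ℝ (E j) := by
    intro j h1 h2
    let Hs : Submodule ℝ (KK n j → ℝ) :=
      LinearMap.ker (Matrix.mulVecLin (downMat n j))
    have hrank : n.choose j - n.choose (j-1) ≤ Module.finrank ℝ Hs := by
      have hr2 := LinearMap.finrank_range_add_finrank_ker
        (Matrix.mulVecLin (downMat n j))
      have hr3 : Module.finrank ℝ
            (LinearMap.range (Matrix.mulVecLin (downMat n j)))
          ≤ Module.finrank ℝ (KK n (j-1) → ℝ) := Submodule.finrank_le _
      rw [hdim j] at hr2
      rw [hdim (j-1)] at hr3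
      show n.choose j - n.choose (j-1)
        ≤ Module.finrank ℝ (LinearMap.ker (Matrix.mulVecLin (downMat n j)))
      omega
    have hharm : ∀ f : KK n j → ℝ, f ∈ Hs →
        ∀ A : Finset (Fin n), A.card < j → Nfun j f A = 0 := by
      intro f hf
      exact harm_extend j h1 (by omega) f ((mem_ker_downMat j f).1 hf)
    have hup : ∀ x : Hs, (Matrix.mulVecLin (upMat n k j)) x.1 ∈ E j := by
      intro x
      rw [Module.End.mem_eigenspace_iff]
      have := up_mem_eigen j k h2 hkn x.1 (hharm x.1 x.2)
      simpa [Matrix.mulVecLin_apply] using this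
    let Φ : Hs →ₗ[ℝ] E j :=
      LinearMap.codRestrict (E j)
        ((Matrix.mulVecLin (upMat n k j)).domRestrict Hs) hup
    have hinj : Function.Injective Φ := by
      refine LinearMap.ker_eq_bot.1 ?_
      rw [eq_bot_iff]
      intro x hx
      have hx0 : (Matrix.mulVecLin (upMat n k j)) x.1 = 0 := by
        have := congrArg Subtype.val (LinearMap.mem_ker.1 hx)
        exact this
      have : x.1 = 0 :=
        up_injective j k h2 hkn x.1 (hharm x.1 x.2)
          (by simpa [Matrix.mulVecLin_apply] using hx0)
      simpa [Submodule.mem_bot] using Subtype.ext this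
    have := LinearMap.finrank_le_finrank_of_injective hinj
    omega
  -- lower bound for j = 0
  have low0 : 1 ≤ Module.finrank ℝ (E 0) := by
    have hmem : (fun _ : KK n k => (1:ℝ)) ∈ E 0 := by
      rw [Module.End.mem_eigenspace_iff]
      have := ones_mem_eigen (n := n) k hkn
      rw [Matrix.mulVecLin_apply, this]
      congr 1
      simp [μ]
    have hne : (fun _ : KK n k => (1:ℝ)) ≠ 0 := by
      have hnonempty : Nonempty (KK n k) := by
        obtain ⟨t, _, hc⟩ := Finset.exists_subset_card_eq
          (show k ≤ (Finset.univ : Finset (Fin n)).card by simp; omega)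
        exact ⟨⟨t, hc⟩⟩
      intro h
      have := congrFun h hnonempty.some
      simpa using this
    have hnt : Nontrivial (E 0) := by
      refine ⟨⟨⟨_, hmem⟩, 0, ?_⟩⟩
      intro hc
      exact hne (by simpa using congrArg Subtype.val hc)
    have := Module.finrank_pos_iff (R := ℝ) (M := E 0) |>.2 hnt
    omega
  -- independence
  have hmuinj : Function.Injective (fun j : Fin (k+1) => μ j.1) := by
    intro a b hab
    exact Fin.ext (mu_inj n k hkn a.1 (by omega) b.1 (by omega) hab)
  have hindep : iSupIndep (fun j : Fin (k+1) => E j.1) :=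
    (Module.End.eigenspaces_iSupIndep (Matrix.mulVecLin (disjMatrix n k))).comp hmuinj
  have hsum := sum_finrank_le (fun j : Fin (k+1) => E j.1) hindep
  rw [hdim k] at hsum
  have hsum' : ∑ j ∈ Finset.range (k+1), Module.finrank ℝ (E j) ≤ n.choose k := by
    rw [← Fin.sum_univ_eq_sum_range]
    exact hsum
  let L : ℕ → ℕ := fun j => if j = 0 then 1 else n.choose j - n.choose (j-1)
  have hLsum : ∑ j ∈ Finset.range (k+1), L j = n.choose k := tele n k hkn
  have hLle : ∀ j ∈ Finset.range (k+1), L j ≤ Module.finrank ℝ (E j) := by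
    intro j hj
    simp only [Finset.mem_range] at hj
    by_cases h0 : j = 0
    · subst h0
      simpa [L] using low0
    · simp only [L, if_neg h0]
      exact low j (by omega) (by omega)
  have hle : Module.finrank ℝ (E i) ≤ L i := by
    by_contra hc
    push_neg at hc
    have hlt := Finset.sum_lt_sum hLle
      ⟨i, Finset.mem_range.2 (by omega), hc⟩
    omega
  have hge := hLle i (Finset.mem_range.2 (by omega))
  have heq : Module.finrank ℝ (E i) = L i := le_antisymm hle hge
  rw [heq]
  simp only [L, if_neg (by omega : ¬ i = 0)]
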